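/- Let G be a connected P_4-free graph with at least 2 vertices. Then G can be written as the join G = G1 * G2 of two graphs G1, G2 on disjoint nonempty vertex sets, i.e., the vertex set of G partitions into two nonempty parts such that every vertex of one part is adjacent to every vertex of the other part. -/

import Mathlib

open SimpleGraph

/-- The join of two simple graphs on disjoint vertex sets. -/
def joinG {V1 V2 : Type} (G1 : SimpleGraph V1) (G2 : SimpleGraph V2) :
    SimpleGraph (V1 ⊕ V2) where
  Adj a b :=
    match a, b with
    | Sum.inl x, Sum.inl y => G1.Adj x y
    | Sum.inr x, Sum.inr y => G2.Adj x y
    | Sum.inl _, Sum.inr _ => True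
    | Sum.inr _, Sum.inl _ => True
  symm := by
    constructor
    intro a b h
    cases a <;> cases b <;> simp_all <;> exact h.symm
  loopless := by
    constructor
    intro a
    cases a <;> simp

/-- A graph `G` contains an induced copy of the path on `k` vertices iff there is a
graph embedding (= isomorphism onto an induced subgraph) of `pathGraph k` into `G`. -/
def HasInducedPathOn {V : Type} (G : SimpleGraph V) (k : ℕ) : Prop :=
  Nonempty (SimpleGraph.pathGraph k ↪g G)

/-- `G` is `P_k`-free. -/
def PFree {V : Type} (G : SimpleGraph V) (k : ℕ) : Prop :=
  ¬ HasInducedPathOn G k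

/-- Length (number of edges) of a longest induced path of `G`. -/
noncomputable def longestInducedPathLen {V : Type} (G : SimpleGraph V) : ℕ :=
  sSup {k : ℕ | HasInducedPathOn G (k + 1)}

/-- `X` is a dominating set of `G`. -/
def IsDomSet {V : Type} (G : SimpleGraph V) (X : Set V) : Prop :=
  ∀ v ∉ X, ∃ u ∈ X, G.Adj v u

/-- `X` is a connected dominating set of `G`. -/
def IsConnDomSet {V : Type} (G : SimpleGraph V) (X : Set V) : Prop :=
  IsDomSet G X ∧ (G.induce X).Connected

/-- A minimum connected dominating set. -/
def IsMinimumConnDomSet {V : Type} (G : SimpleGraph V) (X : Set V) : Prop :=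
  IsConnDomSet G X ∧ ∀ Y : Set V, IsConnDomSet G Y → X.ncard ≤ Y.ncard

/-- Weakly closed graph: it admits a labeling of its vertices such that whenever
`{a,b}` is an edge and `c` has a label strictly between those of `a` and `b`,
then `c` is adjacent to `a` or to `b`. -/
def WeaklyClosed {V : Type} [Fintype V] (G : SimpleGraph V) : Prop :=
  ∃ e : V ≃ Fin (Fintype.card V),
    ∀ a b c : V, G.Adj a b → e a < e c → e c < e b → (G.Adj a c ∨ G.Adj b c)

/-- Number of connected components. -/
noncomputable def numComp {V : Type} (G : SimpleGraph V) : ℕ :=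
  Nat.card G.ConnectedComponent

/-- The collection `C(G)` of sets with the cut point property, together with `∅`. -/
def cutSets {V : Type} (G : SimpleGraph V) : Set (Set V) :=
  {(∅ : Set V)} ∪
    {T : Set V | T ⊂ Set.univ ∧ ∀ i ∈ T,
      numComp (G.induce (Tᶜ ∪ {i})) < numComp (G.induce Tᶜ)}

/-- The collection `C(H)` for the induced subgraph `H` of `G` on a subset `W`,
viewed as a collection of subsets of the ambient vertex set. -/
def relCutSets {V : Type} (G : SimpleGraph V) (W : Set V) : Set (Set V) :=
  {T : Set V | T ⊆ W ∧ (T = ∅ ∨ (T ≠ W ∧ ∀ i ∈ T,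
    numComp (G.induce ((W \ T) ∪ {i})) < numComp (G.induce (W \ T))))}

/-- `G` is `ℓ`-connected. -/
def LConnected {V : Type} [Fintype V] (G : SimpleGraph V) (ℓ : ℕ) : Prop :=
  ℓ + 1 ≤ Fintype.card V ∧
    ∀ A : Set V, A.ncard < ℓ → (G.induce Aᶜ).Connected

/-- A maximal clique of `G`. -/
def IsMaxClique {V : Type} (G : SimpleGraph V) (s : Set V) : Prop :=
  G.IsClique s ∧ ∀ t : Set V, G.IsClique t → s ⊆ t → s = t




lemma hasP4 {V : Type} {G : SimpleGraph V} {a b c d : V}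
    (hab : G.Adj a b) (hbc : G.Adj b c) (hcd : G.Adj c d)
    (hac : ¬ G.Adj a c) (had : ¬ G.Adj a d) (hbd : ¬ G.Adj b d) :
    HasInducedPathOn G 4 := by
  have h1 : a ≠ b := hab.ne
  have h2 : b ≠ c := hbc.ne
  have h3 : c ≠ d := hcd.ne
  have h4 : a ≠ c := by rintro rfl; exact had hcd
  have h5 : b ≠ d := by rintro rfl; exact had hab
  have h6 : a ≠ d := by rintro rfl; exact hac hcd.symm
  have hac' : ¬ G.Adj c a := fun h => hac h.symm
  have had' : ¬ G.Adj d a := fun h => had h.symm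
  have hbd' : ¬ G.Adj d b := fun h => hbd h.symm
  refine ⟨⟨⟨![a,b,c,d], ?_⟩, ?_⟩⟩
  · intro i j hij
    fin_cases i <;> fin_cases j <;> simp_all <;> simp_all [eq_comm]
  · intro i j
    show G.Adj (![a,b,c,d] i) (![a,b,c,d] j) ↔ _
    fin_cases i <;> fin_cases j <;>
      simp only [Function.Embedding.coeFn_mk, Matrix.cons_val_zero, Matrix.cons_val_one, Matrix.head_cons,
        Matrix.cons_val_two, Matrix.tail_cons, Matrix.cons_val_three, pathGraph_adj] <;>
      simp [hab, hbc, hcd, hac, had, hbd, hab.symm, hbc.symm, hcd.symm, hac', had', hbd',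
        G.irrefl] <;> decide


lemma pfree_compl {V : Type} {G : SimpleGraph V} (h : PFree G 4) : PFree Gᶜ 4 := by
  rintro ⟨f⟩
  -- f : pathGraph 4 ↪g Gᶜ ; extract the four vertices
  set a := f 0; set b := f 1; set c := f 2; set d := f 3
  have adj : ∀ i j : Fin 4, (pathGraph 4).Adj i j → Gᶜ.Adj (f i) (f j) := fun i j hij =>
    f.map_rel_iff.2 hij
  have nadj : ∀ i j : Fin 4, ¬ (pathGraph 4).Adj i j → ¬ Gᶜ.Adj (f i) (f j) := fun i j hij hc =>
    hij (f.map_rel_iff.1 hc)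
  have hne : ∀ i j : Fin 4, i ≠ j → f i ≠ f j := fun i j hij he => hij (f.injective he)
  -- complement edges: ab, bc, cd ; complement nonedges: ac, ad, bd
  have cab : ¬ G.Adj a b := (adj 0 1 (by rw [pathGraph_adj]; decide)).2
  have cbc : ¬ G.Adj b c := (adj 1 2 (by rw [pathGraph_adj]; decide)).2
  have ccd : ¬ G.Adj c d := (adj 2 3 (by rw [pathGraph_adj]; decide)).2
  have gac : G.Adj a c := by
    by_contra hx; exact nadj 0 2 (by rw [pathGraph_adj]; decide) ((G.compl_adj _ _).2 ⟨hne 0 2 (by decide), hx⟩)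
  have gad : G.Adj a d := by
    by_contra hx; exact nadj 0 3 (by rw [pathGraph_adj]; decide) ((G.compl_adj _ _).2 ⟨hne 0 3 (by decide), hx⟩)
  have gbd : G.Adj b d := by
    by_contra hx; exact nadj 1 3 (by rw [pathGraph_adj]; decide) ((G.compl_adj _ _).2 ⟨hne 1 3 (by decide), hx⟩)
  -- induced P4 in G : c - a - d - b
  exact h (hasP4 gac.symm gad gbd.symm ccd (fun h' => cbc h'.symm) cab)

def SplitOn {V : Type} (G : SimpleGraph V) (S : Set V) : Prop :=
  ∃ A : Set V, A ⊆ S ∧ A.Nonempty ∧ (S \ A).Nonempty ∧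
    ∀ a ∈ A, ∀ b ∈ S \ A, ¬ G.Adj a b

lemma step {V : Type} (G : SimpleGraph V) (hfree : PFree G 4) (v : V) (S : Set V)
    (hv : v ∈ S) (h : SplitOn Gᶜ (S \ {v})) : SplitOn G S ∨ SplitOn Gᶜ S := by
  obtain ⟨A, hAS, ⟨a1, ha1⟩, ⟨b1, hb1⟩, hcr⟩ := h
  have hvA : v ∉ A := fun hx => (hAS hx).2 rfl
  -- cross pairs are G-edges
  have hadj : ∀ a ∈ A, ∀ b ∈ (S \ {v}) \ A, G.Adj a b := by
    intro a ha b hb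
    by_contra hx
    have hne : a ≠ b := fun he => hb.2 (he ▸ ha)
    exact hcr a ha b hb ((G.compl_adj _ _).2 ⟨hne, hx⟩)
  have notc : ∀ {x y : V}, G.Adj x y → ¬ Gᶜ.Adj x y := fun h' hc => ((G.compl_adj _ _).1 hc).2 h'
  by_cases hA : ∀ a ∈ A, G.Adj v a
  · right
    refine ⟨A, fun x hx => (hAS hx).1, ⟨a1, ha1⟩, ⟨v, hv, hvA⟩, ?_⟩
    intro a ha b hb
    by_cases hbv : b = v
    · subst hbv; exact notc (hA a ha).symm
    · exact notc (hadj a ha b ⟨⟨hb.1, hbv⟩, hb.2⟩)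
  · push_neg at hA
    obtain ⟨a₀, ha₀, hva₀⟩ := hA
    by_cases hB : ∀ b ∈ (S \ {v}) \ A, G.Adj v b
    · right
      refine ⟨(S \ {v}) \ A, fun x hx => hx.1.1, ⟨b1, hb1⟩, ⟨v, hv, fun hx => hx.1.2 rfl⟩, ?_⟩
      intro b hb c hc
      by_cases hcv : c = v
      · subst hcv; exact notc (hB b hb).symm
      · have hcA : c ∈ A := by
          by_contra hx; exact hc.2 ⟨⟨hc.1, hcv⟩, hx⟩
        exact notc (hadj c hcA b hb).symm
    · push_neg at hB
      obtain ⟨b₀, hb₀, hvb₀⟩ := hB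
      -- closure claims
      have hAcl : ∀ x ∈ A, G.Adj v x → ∀ y ∈ A, ¬ G.Adj v y → G.Adj x y := by
        intro x hx hvx y hy hvy
        by_contra hxy
        exact hfree (hasP4 hvx (hadj x hx b₀ hb₀) (hadj y hy b₀ hb₀).symm hvb₀ hvy hxy)
      have hBcl : ∀ x ∈ (S \ {v}) \ A, G.Adj v x → ∀ y ∈ (S \ {v}) \ A, ¬ G.Adj v y →
          G.Adj x y := by
        intro x hx hvx y hy hvy
        by_contra hxy
        exact hfree (hasP4 hvx (hadj a₀ ha₀ x hx).symm (hadj a₀ ha₀ y hy) hva₀ hvy hxy)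
      by_cases hN : ∃ x₀ ∈ S, G.Adj v x₀
      · obtain ⟨x₀, hx₀S, hvx₀⟩ := hN
        right
        refine ⟨{x | x ∈ S ∧ G.Adj v x}, fun x hx => hx.1, ⟨x₀, hx₀S, hvx₀⟩,
          ⟨v, hv, fun hx => G.irrefl hx.2⟩, ?_⟩
        intro x hx z hz
        have hxv : x ≠ v := fun he => G.irrefl (he ▸ hx.2)
        have hxS' : x ∈ S \ {v} := ⟨hx.1, hxv⟩
        by_cases hzv : z = v
        · subst hzv; exact notc hx.2.symm
        · have hzS' : z ∈ S \ {v} := ⟨hz.1, hzv⟩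
          have hvz : ¬ G.Adj v z := fun hc => hz.2 ⟨hz.1, hc⟩
          refine notc ?_
          by_cases hxA : x ∈ A
          · by_cases hzA : z ∈ A
            · exact hAcl x hxA hx.2 z hzA hvz
            · exact hadj x hxA z ⟨hzS', hzA⟩
          · by_cases hzA : z ∈ A
            · exact (hadj z hzA x ⟨hxS', hxA⟩).symm
            · exact hBcl x ⟨hxS', hxA⟩ hx.2 z ⟨hzS', hzA⟩ hvz
      · push_neg at hN
        left
        refine ⟨{v}, by simpa using hv, ⟨v, rfl⟩, ⟨a₀, (hAS ha₀).1, ?_⟩, ?_⟩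
        · simp only [Set.mem_singleton_iff]; exact fun he => (hAS ha₀).2 (by simp [he])
        · rintro a rfl b hb
          exact hN b hb.1

lemma key {V : Type} : ∀ (n : ℕ) (G : SimpleGraph V) (S : Finset V), PFree G 4 →
    S.card = n → 2 ≤ n → SplitOn G ↑S ∨ SplitOn Gᶜ ↑S := by
  classical
  intro n
  induction n using Nat.strong_induction_on with
  | _ n ih =>
    intro G S hfree hcard hn
    by_cases h2 : n = 2
    · subst h2
      obtain ⟨x, y, hxy, rfl⟩ := Finset.card_eq_two.1 hcard
      have hSy : ((({x, y} : Finset V) : Set V) \ {x}) = {y} := by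
        ext z
        simp only [Finset.coe_insert, Finset.coe_singleton, Set.mem_diff,
          Set.mem_insert_iff, Set.mem_singleton_iff]
        constructor
        · rintro ⟨h | h, h'⟩ <;> tauto
        · rintro rfl; exact ⟨Or.inr rfl, fun h => hxy h.symm⟩
      by_cases hadj : G.Adj x y
      · right
        refine ⟨{x}, by simp, ⟨x, rfl⟩, ?_, ?_⟩
        · rw [hSy]; exact ⟨y, rfl⟩
        · rintro a rfl b hb
          rw [hSy] at hb
          rw [hb]
          exact fun hc => ((G.compl_adj _ _).1 hc).2 hadj
      · left
        refine ⟨{x}, by simp, ⟨x, rfl⟩, ?_, ?_⟩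
        · rw [hSy]; exact ⟨y, rfl⟩
        · rintro a rfl b hb
          rw [hSy] at hb
          rw [hb]
          exact hadj
    · have hn3 : 3 ≤ n := by omega
      have hS0 : S.Nonempty := by
        rw [← Finset.card_pos, hcard]; omega
      obtain ⟨v, hv⟩ := hS0
      have hcard' : (S.erase v).card = n - 1 := by
        rw [Finset.card_erase_of_mem hv, hcard]
      have hih := ih (n - 1) (by omega) G (S.erase v) hfree hcard' (by omega)
      have hcoer : ((S.erase v : Finset V) : Set V) = (S : Set V) \ {v} :=
        Finset.coe_erase v S
      rw [hcoer] at hih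
      rcases hih with h | h
      · have h' : SplitOn Gᶜᶜ ((S : Set V) \ {v}) := by rw [compl_compl]; exact h
        rcases step Gᶜ (pfree_compl hfree) v S (by exact hv) h' with h'' | h''
        · right; exact h''
        · left; rw [← compl_compl G]; exact h''
      · exact step G hfree v S (by exact hv) h

lemma walk_cross {V : Type} {G : SimpleGraph V} {A : Set V} :
    ∀ {u w : V}, G.Walk u w → u ∈ A → w ∉ A → ∃ a ∈ A, ∃ b, b ∉ A ∧ G.Adj a b := by
  intro u w p
  induction p with
  | nil => intro hu hw; exact absurd hu hw
  | @cons x y z h q ihp =>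
    intro hu hw
    by_cases hy : y ∈ A
    · exact ihp hy hw
    · exact ⟨x, hu, y, hy, h⟩

theorem stmt6' {V : Type} [Fintype V] (G : SimpleGraph V)
    (hconn : G.Connected) (hfree : PFree G 4) (hcard : 2 ≤ Fintype.card V) :
    ∃ A : Set V, A.Nonempty ∧ Aᶜ.Nonempty ∧ ∀ a ∈ A, ∀ b ∉ A, G.Adj a b := by
  classical
  have hk := key (Fintype.card V) G Finset.univ hfree Finset.card_univ hcard
  rw [Finset.coe_univ] at hk
  rcases hk with h | h
  · exfalso
    obtain ⟨A, _, ⟨a, ha⟩, ⟨b, hb⟩, hcr⟩ := h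
    obtain ⟨p⟩ := hconn.preconnected a b
    obtain ⟨a', ha', b', hb', hadj⟩ := walk_cross p ha hb.2
    exact hcr a' ha' b' ⟨Set.mem_univ _, hb'⟩ hadj
  · obtain ⟨A, _, hA, hAc, hcr⟩ := h
    refine ⟨A, hA, ?_, ?_⟩
    · obtain ⟨b, _, hb⟩ := hAc; exact ⟨b, hb⟩
    · intro a ha b hb
      have hc := hcr a ha b ⟨Set.mem_univ _, hb⟩
      by_contra hx
      exact hc ((G.compl_adj _ _).2 ⟨fun he => hb (he ▸ ha), hx⟩)

theorem stmt6 {V : Type} [Fintype V] (G : SimpleGraph V)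
    (hconn : G.Connected) (hfree : PFree G 4) (hcard : 2 ≤ Fintype.card V) :
    ∃ A : Set V, A.Nonempty ∧ Aᶜ.Nonempty ∧ ∀ a ∈ A, ∀ b ∉ A, G.Adj a b :=
  stmt6' G hconn hfree hcard
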